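/- Let A be a terminating ARRIVAL instance with |V| = n, and let ℓ be the maximum over v ∈ V of the length of a shortest directed path from v to {d, d̄} in G(A). Then the run procedure traverses at most (n - ℓ + 2)·2^ℓ - 2 proper edges (edges other than (Y,o)) before terminating. -/

import Mathlib

variable {V : Type} [Fintype V] [DecidableEq V]

/-- An ARRIVAL instance: origin `o` and two successor functions into `V ⊕ Bool`,
where `Sum.inr false` is the destination `d` and `Sum.inr true` is `d̄`. -/
structure Arrival (V : Type) where
  o : V
  sEven : V → V ⊕ Bool
  sOdd : V → V ⊕ Bool

/-- Destination predicate. -/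
def DestP {V : Type} : V ⊕ Bool → Prop := fun u => ∃ t, u = Sum.inr t

/-- Edge relation of the switch graph (proper edges only). -/
def Arrival.Edge (A : Arrival V) (u w : V ⊕ Bool) : Prop :=
  ∃ x : V, u = Sum.inl x ∧ (w = A.sEven x ∨ w = A.sOdd x)

/-- There is a directed walk of length `m` from `u` to a vertex satisfying `P`. -/
def Arrival.PathLen (A : Arrival V) (u : V ⊕ Bool) (P : V ⊕ Bool → Prop) (m : ℕ) : Prop :=
  ∃ f : ℕ → V ⊕ Bool, f 0 = u ∧ P (f m) ∧ ∀ i < m, A.Edge (f i) (f (i + 1))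

/-- `m` is the length of a shortest directed path from `u` to a vertex satisfying `P`. -/
def Arrival.ShortestLen (A : Arrival V) (u : V ⊕ Bool) (P : V ⊕ Bool → Prop) (m : ℕ) : Prop :=
  A.PathLen u P m ∧ ∀ m' < m, ¬ A.PathLen u P m'

/-- The instance is terminating: from every vertex a destination is reachable. -/
def Arrival.Terminating (A : Arrival V) : Prop :=
  ∀ v : V, ∃ m, A.PathLen (Sum.inl v) DestP m

/-- One step of the run procedure on states (position, switch configuration);
`false` means the current successor is the even one. Destinations are absorbing. -/
def Arrival.runStep [DecidableEq V] (A : Arrival V) :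
    (V ⊕ Bool) × (V → Bool) → (V ⊕ Bool) × (V → Bool) := fun s =>
  match s.1 with
  | Sum.inr _ => s
  | Sum.inl v => ((if s.2 v then A.sOdd v else A.sEven v),
      fun u => if u = v then !s.2 v else s.2 u)

/-- The state of the run procedure after `k` proper steps (the train starts at `o`). -/
def Arrival.run [DecidableEq V] (A : Arrival V) (k : ℕ) : (V ⊕ Bool) × (V → Bool) :=
  A.runStep^[k] (Sum.inl A.o, fun _ => false)

set_option linter.unusedSectionVars false

section AuxiliaryProof

def pos (A : Arrival V) (k : ℕ) : V ⊕ Bool := (A.run k).1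
def swt (A : Arrival V) (k : ℕ) : V → Bool := (A.run k).2
def Succ (A : Arrival V) (v : V) (b : Bool) : V ⊕ Bool := if b then A.sOdd v else A.sEven v

lemma run_succ (A : Arrival V) (k : ℕ) : A.run (k+1) = A.runStep (A.run k) :=
  Function.iterate_succ_apply' _ _ _

lemma run_succ_inr {A : Arrival V} {k : ℕ} {t : Bool} (h : pos A k = Sum.inr t) :
    A.run (k+1) = A.run k := by
  rw [run_succ]; unfold Arrival.runStep; rw [show (A.run k).1 = Sum.inr t from h]

lemma pos_succ_inl {A : Arrival V} {k : ℕ} {v : V} (h : pos A k = Sum.inl v) :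
    pos A (k+1) = Succ A v (swt A k v) := by
  unfold pos at *
  rw [run_succ]; unfold Arrival.runStep; rw [show (A.run k).1 = Sum.inl v from h]
  rfl

lemma swt_succ_inl {A : Arrival V} {k : ℕ} {v : V} (h : pos A k = Sum.inl v) :
    swt A (k+1) = fun u => if u = v then !swt A k v else swt A k u := by
  unfold pos at h
  unfold swt
  rw [run_succ]; unfold Arrival.runStep; rw [show (A.run k).1 = Sum.inl v from h]

lemma absorb {A : Arrival V} {k m : ℕ} {t : Bool} (h : pos A k = Sum.inr t) (hm : k ≤ m) :
    pos A m = Sum.inr t := by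
  induction m with
  | zero => exact (Nat.le_zero.mp hm) ▸ h
  | succ m ih =>
      rcases Nat.lt_or_ge k (m+1) with h1 | h1
      · have hm' : k ≤ m := by omega
        have := ih hm'
        unfold pos at this ⊢
        rw [run_succ_inr this]; exact this
      · have : k = m + 1 := by omega
        exact this ▸ h

/-- number of visits to `v` before time `k` -/
def nv (A : Arrival V) (v : V) (k : ℕ) : ℕ :=
  ((Finset.range k).filter (fun j => pos A j = Sum.inl v)).card

/-- number of traversals of the `b`-edge out of `v` before time `k` -/
def lc (A : Arrival V) (v : V) (b : Bool) (k : ℕ) : ℕ :=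
  ((Finset.range k).filter (fun j => pos A j = Sum.inl v ∧ swt A j v = b)).card

lemma nv_succ (A : Arrival V) (v : V) (k : ℕ) :
    nv A v (k+1) = if pos A k = Sum.inl v then nv A v k + 1 else nv A v k := by
  unfold nv
  rw [Finset.range_add_one, Finset.filter_insert]
  split
  · rw [Finset.card_insert_of_notMem (by simp)]
  · rfl

lemma lc_succ (A : Arrival V) (v : V) (b : Bool) (k : ℕ) :
    lc A v b (k+1) = if pos A k = Sum.inl v ∧ swt A k v = b then lc A v b k + 1 else lc A v b k := by
  unfold lc
  rw [Finset.range_add_one, Finset.filter_insert]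
  split
  · rw [Finset.card_insert_of_notMem (by simp)]
  · rfl

lemma swt_zero (A : Arrival V) (v : V) : swt A 0 v = false := rfl

lemma swt_parity (A : Arrival V) (v : V) (k : ℕ) :
    swt A k v = decide (nv A v k % 2 = 1) := by
  induction k with
  | zero => simp [swt_zero, nv]
  | succ k ih =>
      rcases h : pos A k with w | t
      · have hsw := swt_succ_inl h
        rw [nv_succ, hsw]
        by_cases hv : v = w
        · subst hv
          simp [h, ih]
          rcases Nat.even_or_odd (nv A v k) with he | ho
          · have : nv A v k % 2 = 0 := Nat.even_iff.mp he
            simp [this, Nat.succ_mod_two_eq_one_iff.mpr this]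
          · have : nv A v k % 2 = 1 := Nat.odd_iff.mp ho
            simp [this, Nat.succ_mod_two_eq_zero_iff.mpr this]
        · have hne : pos A k ≠ Sum.inl v := by simp [h]; exact fun hh => hv hh.symm
          simp [hne, hv, ih]
      · have : A.run (k+1) = A.run k := run_succ_inr h
        have hsw : swt A (k+1) = swt A k := by unfold swt; rw [this]
        have hne : pos A k ≠ Sum.inl v := by simp [h]
        rw [nv_succ, if_neg hne, hsw, ih]

lemma lc_formula (A : Arrival V) (v : V) (k : ℕ) :
    lc A v false k = (nv A v k + 1) / 2 ∧ lc A v true k = nv A v k / 2 := by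
  induction k with
  | zero => simp [lc, nv]
  | succ k ih =>
      obtain ⟨ihf, iht⟩ := ih
      rw [lc_succ, lc_succ, nv_succ]
      by_cases h : pos A k = Sum.inl v
      · rw [swt_parity]
        rcases Nat.even_or_odd (nv A v k) with he | ho
        · have h0 : nv A v k % 2 = 0 := Nat.even_iff.mp he
          simp only [h, h0, if_pos, true_and]
          norm_num
          constructor
          · rw [ihf]; omega
          · rw [iht]; omega
        · have h1 : nv A v k % 2 = 1 := Nat.odd_iff.mp ho
          simp only [h, h1, true_and]
          norm_num
          constructor
          · rw [ihf]; omega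
          · rw [iht]; omega
      · simp only [h, false_and, if_neg, ite_false]
        simp [ihf, iht, h]

lemma nv_stable (A : Arrival V) (v : V) {a k : ℕ} (hak : a ≤ k)
    (h : ∀ m, a ≤ m → m < k → pos A m ≠ Sum.inl v) : nv A v k = nv A v a := by
  induction k with
  | zero => rw [Nat.le_zero.mp hak]
  | succ k ih =>
      rcases Nat.lt_or_ge a (k+1) with h1 | h1
      · have ha : a ≤ k := by omega
        rw [nv_succ, if_neg (h k ha (by omega)), ih ha (fun m hm hmk => h m hm (by omega))]
      · have : a = k + 1 := by omega
        rw [this]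

def Closer (A : Arrival V) (dist : V → ℕ) (v : V) (b : Bool) : Prop :=
  (∃ t, Succ A v b = Sum.inr t ∧ dist v = 1) ∨
  (∃ w, Succ A v b = Sum.inl w ∧ dist w + 1 = dist v)

section Dist

variable {A : Arrival V} {dist : V → ℕ}
  (hdist : ∀ v : V, A.ShortestLen (Sum.inl v) DestP (dist v))

include hdist

lemma arr_dist_pos (v : V) : 1 ≤ dist v := by
  obtain ⟨⟨f, h0, hP, hE⟩, hmin⟩ := hdist v
  by_contra h
  have hd : dist v = 0 := by omega
  rw [hd, h0] at hP
  obtain ⟨t, ht⟩ := hP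
  exact absurd ht (by simp)

lemma closer_exists (v : V) : ∃ b : Bool, Closer A dist v b := by
  obtain ⟨⟨f, h0, hP, hE⟩, hmin⟩ := hdist v
  have hd1 : 1 ≤ dist v := arr_dist_pos hdist v
  obtain ⟨x, hx, hor⟩ := hE 0 (by omega)
  rw [h0] at hx
  have hxv : x = v := by injection hx.symm
  subst hxv
  -- choose b with f 1 = Succ A x b
  have hb : ∃ b : Bool, f 1 = Succ A x b := by
    rcases hor with h | h
    · exact ⟨false, h⟩
    · exact ⟨true, h⟩
  obtain ⟨b, hfb⟩ := hb
  refine ⟨b, ?_⟩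
  rcases hf1 : f 1 with w | t
  · -- inl case
    right
    refine ⟨w, by rw [← hfb, hf1], ?_⟩
    -- dist w ≤ dist x - 1
    have hle : dist w ≤ dist x - 1 := by
      by_contra hlt
      have : A.PathLen (Sum.inl w) DestP (dist x - 1) := by
        refine ⟨fun i => f (i+1), by simpa using hf1, ?_, ?_⟩
        · show DestP (f (dist x - 1 + 1))
          have : dist x - 1 + 1 = dist x := by omega
          rw [this]; exact hP
        · intro i hi
          exact hE (i+1) (by omega)
      obtain ⟨_, hminw⟩ := hdist w
      exact hminw _ (by omega) this
    -- dist w ≥ dist x - 1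
    have hge : dist x - 1 ≤ dist w := by
      by_contra hlt
      obtain ⟨⟨g, hg0, hgP, hgE⟩, _⟩ := hdist w
      have : A.PathLen (Sum.inl x) DestP (dist w + 1) := by
        refine ⟨fun i => if i = 0 then Sum.inl x else g (i-1), by simp, ?_, ?_⟩
        · show DestP (if dist w + 1 = 0 then Sum.inl x else g (dist w + 1 - 1))
          simpa using hgP
        · intro i hi
          show A.Edge (if i = 0 then Sum.inl x else g (i-1))
            (if i + 1 = 0 then Sum.inl x else g (i + 1 - 1))
          rcases Nat.eq_zero_or_pos i with h | h
          · subst h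
            simp only [if_pos rfl, if_neg (Nat.one_ne_zero)]
            norm_num
            refine ⟨x, rfl, ?_⟩
            have : g 0 = Succ A x b := by rw [hg0, ← hf1, hfb]
            rcases b with _ | _
            · left; rw [this]; rfl
            · right; rw [this]; rfl
          · have h1 : i ≠ 0 := by omega
            have h2 : i + 1 ≠ 0 := by omega
            simp only [if_neg h1, if_neg h2]
            have : i + 1 - 1 = (i - 1) + 1 := by omega
            rw [this]
            exact hgE (i-1) (by omega)
      exact hmin _ (by omega) this
    omega
  · -- inr case
    left
    refine ⟨t, by rw [← hfb, hf1], ?_⟩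
    have : A.PathLen (Sum.inl x) DestP 1 := by
      refine ⟨f, h0, by rw [hf1]; exact ⟨t, rfl⟩, ?_⟩
      intro i hi
      have : i = 0 := by omega
      subst this
      exact hE 0 (by omega)
    by_contra h
    exact hmin 1 (by omega) this

end Dist

lemma trav_step {A : Arrival V} {j : ℕ} {v : V} {b : Bool}
    (h : pos A j = Sum.inl v) (hs : swt A j v = b) :
    pos A (j+1) = Succ A v b := by
  rw [pos_succ_inl h, hs]

lemma dest_unique {A : Arrival V} {v : V} {b : Bool} {t : Bool}
    (ht : Succ A v b = Sum.inr t) (k : ℕ) : lc A v b k ≤ 1 := by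
  apply Finset.card_le_one.mpr
  intro j1 h1 j2 h2
  simp only [Finset.mem_filter, Finset.mem_range] at h1 h2
  by_contra hne
  rcases Nat.lt_or_ge j1 j2 with hlt | hge
  · have := trav_step h1.2.1 h1.2.2
    rw [ht] at this
    have := absorb this (by omega : j1 + 1 ≤ j2)
    rw [h2.2.1] at this
    exact absurd this (by simp)
  · have hlt : j2 < j1 := by omega
    have := trav_step h2.2.1 h2.2.2
    rw [ht] at this
    have := absorb this (by omega : j2 + 1 ≤ j1)
    rw [h1.2.1] at this
    exact absurd this (by simp)

lemma lc_le_nv {A : Arrival V} {v w : V} {b : Bool}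
    (hw : Succ A v b = Sum.inl w) (k : ℕ) : lc A v b k ≤ nv A w (k+1) := by
  unfold lc nv
  apply Finset.card_le_card_of_injOn (fun j => j + 1)
  · intro j hj
    simp only [Finset.mem_coe, Finset.mem_filter, Finset.mem_range] at hj ⊢
    refine ⟨by omega, ?_⟩
    rw [trav_step hj.2.1 hj.2.2, hw]
  · intro a1 _ a2 _ h
    simpa using h

lemma nv_bounded {A : Arrival V} {dist : V → ℕ}
    (hdist : ∀ v : V, A.ShortestLen (Sum.inl v) DestP (dist v)) :
    ∀ d (v : V), dist v = d → ∃ B, ∀ k, nv A v k ≤ B := by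
  intro d
  induction d using Nat.strong_induction_on with
  | _ d ih =>
    intro v hd
    obtain ⟨b, hb⟩ := closer_exists hdist v
    rcases hb with ⟨t, ht, h1⟩ | ⟨w, hw, h1⟩
    · refine ⟨3, fun k => ?_⟩
      have h2 := dest_unique ht k
      have h3 := lc_formula A v k
      cases b
      · have := h3.1; omega
      · have := h3.2; omega
    · obtain ⟨B, hB⟩ := ih (dist w) (by omega) w rfl
      refine ⟨2*B+1, fun k => ?_⟩
      have h2 : lc A v b k ≤ nv A w (k+1) := lc_le_nv hw k
      have h3 := hB (k+1)
      have h4 := lc_formula A v k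
      cases b
      · have := h4.1; omega
      · have := h4.2; omega

lemma exists_inr {A : Arrival V} {dist : V → ℕ}
    (hdist : ∀ v : V, A.ShortestLen (Sum.inl v) DestP (dist v)) :
    ∃ k, ∃ t, pos A k = Sum.inr t := by
  have h1 : ∀ v : V, ∃ B, ∀ k, nv A v k ≤ B := fun v => nv_bounded hdist (dist v) v rfl
  choose B hB using h1
  by_contra h
  push_neg at h
  set K := (∑ v : V, B v) + 1 with hK
  have hsub : Finset.range K ⊆
      Finset.univ.biUnion (fun v : V => (Finset.range K).filter (fun j => pos A j = Sum.inl v)) := by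
    intro j hj
    rcases hp : pos A j with w | t
    · exact Finset.mem_biUnion.mpr ⟨w, Finset.mem_univ w,
        Finset.mem_filter.mpr ⟨hj, hp⟩⟩
    · exact absurd hp (h j t)
  have h2 : K ≤ ∑ v : V, nv A v K := by
    calc K = (Finset.range K).card := (Finset.card_range K).symm
    _ ≤ _ := Finset.card_le_card hsub
    _ ≤ ∑ v : V, nv A v K := Finset.card_biUnion_le
  have h3 : (∑ v : V, nv A v K) ≤ ∑ v : V, B v :=
    Finset.sum_le_sum (fun v _ => hB v K)
  omega

lemma visits_lt {A : Arrival V} {T j : ℕ} {v : V} (hT : ∃ t, pos A T = Sum.inr t)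
    (h : pos A j = Sum.inl v) : j < T := by
  by_contra hge
  obtain ⟨t, ht⟩ := hT
  have := absorb ht (by omega : T ≤ j)
  rw [h] at this
  exact absurd this (by simp)

lemma last_of_card {T : ℕ} {P : ℕ → Prop} [DecidablePred P] (hbd : ∀ j, P j → j < T)
    (h1 : 1 ≤ ((Finset.range T).filter P).card) : ∃ j, P j ∧ ∀ j', P j' → j' ≤ j := by
  have hne : ((Finset.range T).filter P).Nonempty := Finset.card_pos.mp (by omega)
  refine ⟨((Finset.range T).filter P).max' hne, ?_, ?_⟩
  · have := ((Finset.range T).filter P).max'_mem hne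
    exact (Finset.mem_filter.mp this).2
  · intro j' hj'
    exact Finset.le_max' _ _ (Finset.mem_filter.mpr ⟨Finset.mem_range.mpr (hbd j' hj'), hj'⟩)

lemma nv_last {A : Arrival V} {T m0 : ℕ} {w : V} (hT : ∃ t, pos A T = Sum.inr t)
    (hm : pos A m0 = Sum.inl w)
    (hlast : ∀ x, pos A x = Sum.inl w → x ≤ m0) :
    nv A w T = nv A w m0 + 1 := by
  have hm0T : m0 < T := visits_lt hT hm
  have h1 : nv A w T = nv A w (m0+1) := by
    apply nv_stable A w (by omega)
    intro m hm1 hm2 hcon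
    exact absurd (hlast m hcon) (by omega)
  rw [h1, nv_succ, if_pos hm]

/-- the statement of the key inductive claim at level `d` -/
def Qs (A : Arrival V) (dist : V → ℕ) (T : ℕ) (d : ℕ) : Prop :=
  ∀ (v : V) (b : Bool), dist v = d → Closer A dist v b →
    lc A v b T ≤ 2^(d-1) ∧
    (lc A v b T = 2^(d-1) →
      ∀ j, pos A j = Sum.inl v → swt A j v = b →
        (∀ j', j < j' → ¬(pos A j' = Sum.inl v ∧ swt A j' v = b)) →
        ∀ m, j < m → ∀ u : V, pos A m = Sum.inl u → dist u < d)

lemma Rlem {A : Arrival V} {dist : V → ℕ} {T : ℕ} (hT : ∃ t, pos A T = Sum.inr t)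
    (hdist : ∀ v : V, A.ShortestLen (Sum.inl v) DestP (dist v))
    {d : ℕ} (hQ : Qs A dist T d) : ∀ v, dist v = d → nv A v T ≤ 2^d := by
  intro v hd
  have hd1 : 1 ≤ d := hd ▸ arr_dist_pos hdist v
  have hpow : 2^d = 2 * 2^(d-1) := by
    conv_lhs => rw [show d = (d-1)+1 by omega]
    rw [pow_succ]; ring
  obtain ⟨b, hb⟩ := closer_exists hdist v
  obtain ⟨hLe, hEq⟩ := hQ v b hd hb
  have hf := lc_formula A v T
  cases b
  · have := hf.1; omega
  · have h2 := hf.2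
    by_contra hN
    have hNeq : nv A v T = 2^d + 1 := by omega
    have hlceq : lc A v true T = 2^(d-1) := by omega
    -- last visit of v
    have hvis1 : 1 ≤ nv A v T := by omega
    obtain ⟨m0, hm0, hm0last⟩ : ∃ m0, pos A m0 = Sum.inl v ∧ ∀ x, pos A x = Sum.inl v → x ≤ m0 :=
      last_of_card (fun j hj => visits_lt hT hj) hvis1
    have hnvm0 : nv A v m0 = 2^d := by
      have := nv_last hT hm0 hm0last; omega
    have hswm0 : swt A m0 v = false := by
      rw [swt_parity, hnvm0]
      simp only [decide_eq_false_iff_not]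
      omega
    -- last true-traversal
    obtain ⟨j0, hj0, hj0last⟩ : ∃ j, (pos A j = Sum.inl v ∧ swt A j v = true) ∧
        ∀ j', (pos A j' = Sum.inl v ∧ swt A j' v = true) → j' ≤ j := by
      apply last_of_card (fun j hj => visits_lt hT hj.1)
      show (1:ℕ) ≤ lc A v true T
      have h1 : 1 ≤ 2^(d-1) := Nat.one_le_two_pow
      omega
    have hj0m0 : j0 < m0 := by
      have h1 : j0 ≤ m0 := hm0last j0 hj0.1
      have h2 : j0 ≠ m0 := by
        intro h; rw [h] at hj0; rw [hj0.2] at hswm0; exact absurd hswm0 (by simp)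
      omega
    have := hEq hlceq j0 hj0.1 hj0.2
      (fun j' hlt hcon => absurd (hj0last j' hcon) (by omega))
      m0 hj0m0 v hm0
    omega

lemma Qlem {A : Arrival V} {dist : V → ℕ} {T : ℕ} (hT : ∃ t, pos A T = Sum.inr t)
    (hdist : ∀ v : V, A.ShortestLen (Sum.inl v) DestP (dist v)) :
    ∀ d, Qs A dist T d := by
  intro d
  induction d using Nat.strong_induction_on with
  | _ d ih =>
    intro v b hd hb
    rcases hb with ⟨t, ht, h1⟩ | ⟨w, hw, h1⟩
    · -- destination case, d = 1
      have hd1 : d = 1 := by omega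
      subst hd1
      constructor
      · simpa using dest_unique ht T
      · intro _ j hpos hswt _ m hm u hu
        have h2 : pos A (j+1) = Sum.inr t := by rw [trav_step hpos hswt, ht]
        have h3 := absorb h2 (by omega : j+1 ≤ m)
        rw [hu] at h3
        exact absurd h3 (by simp)
    · -- internal case
      have hdw : dist w = d - 1 := by omega
      have hdw1 : 1 ≤ dist w := arr_dist_pos hdist w
      have hd2 : 2 ≤ d := by omega
      have hQw : Qs A dist T (d-1) := ih (d-1) (by omega)
      have hRw : nv A w T ≤ 2^(d-1) := Rlem hT hdist hQw w hdw
      have hposT : pos A T ≠ Sum.inl w := by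
        obtain ⟨t, ht⟩ := hT; rw [ht]; simp
      have hle : lc A v b T ≤ nv A w T := by
        have h2 := lc_le_nv hw T
        have h3 : nv A w (T+1) = nv A w T := by rw [nv_succ, if_neg hposT]
        omega
      refine ⟨le_trans hle hRw, ?_⟩
      intro hlc j0 hpos hswt hnol m hm u hu
      -- the image of the traversal set under +1 is exactly the visit set of w
      set TravSet := (Finset.range T).filter
        (fun j => pos A j = Sum.inl v ∧ swt A j v = b) with hTS
      set VisW := (Finset.range T).filter (fun j => pos A j = Sum.inl w) with hVW
      have himg : TravSet.image (fun j => j + 1) ⊆ VisW := by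
        intro x hx
        obtain ⟨j, hj, rfl⟩ := Finset.mem_image.mp hx
        rw [hTS] at hj
        simp only [Finset.mem_filter, Finset.mem_range] at hj
        have hstep : pos A (j+1) = Sum.inl w := by rw [trav_step hj.2.1 hj.2.2, hw]
        rw [hVW]
        exact Finset.mem_filter.mpr ⟨Finset.mem_range.mpr (visits_lt hT hstep), hstep⟩
      have hcardimg : (TravSet.image (fun j => j + 1)).card = 2^(d-1) := by
        rw [Finset.card_image_of_injective _ (fun a1 a2 h => by omega)]
        exact hlc
      have hVWcard : VisW.card = nv A w T := rfl
      have heqset : TravSet.image (fun j => j + 1) = VisW := by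
        apply Finset.eq_of_subset_of_card_le himg
        rw [hcardimg, hVWcard]
        exact hRw
      have hNw : nv A w T = 2^(d-1) := by
        rw [← hVWcard, ← heqset, hcardimg]
      -- j0 is in the traversal set
      have hj0T : j0 < T := visits_lt hT hpos
      have hj0mem : j0 ∈ TravSet := by
        rw [hTS]; exact Finset.mem_filter.mpr ⟨Finset.mem_range.mpr hj0T, hpos, hswt⟩
      -- position at j0+1 is w, and it is the last visit of w
      have hposj1 : pos A (j0+1) = Sum.inl w := by rw [trav_step hpos hswt, hw]
      have hlastw : ∀ x, pos A x = Sum.inl w → x ≤ j0 + 1 := by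
        intro x hx
        have hxm : x ∈ VisW := by
          rw [hVW]; exact Finset.mem_filter.mpr ⟨Finset.mem_range.mpr (visits_lt hT hx), hx⟩
        rw [← heqset] at hxm
        obtain ⟨j, hj, rfl⟩ := Finset.mem_image.mp hxm
        have : j ≤ j0 := by
          by_contra hcon
          rw [hTS] at hj
          simp only [Finset.mem_filter, Finset.mem_range] at hj
          exact hnol j (by omega) ⟨hj.2.1, hj.2.2⟩
        omega
      have hpow : 2^(d-1) = 2 * 2^(d-2) := by
        conv_lhs => rw [show d - 1 = (d-2)+1 by omega]
        rw [pow_succ]; ring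
      have hnvj1 : nv A w (j0+1) = 2^(d-1) - 1 := by
        have := nv_last hT hposj1 hlastw
        omega
      have hswj1 : swt A (j0+1) w = true := by
        rw [swt_parity, hnvj1]
        have h1 : 1 ≤ 2^(d-2) := Nat.one_le_two_pow
        simp only [decide_eq_true_eq]
        omega
      obtain ⟨b', hb'⟩ := closer_exists hdist w
      have hfw := lc_formula A w T
      have hlcw : lc A w b' T = 2^((d-1)-1) := by
        have h1 : (d-1)-1 = d-2 := by omega
        rw [h1]
        cases b'
        · have := hfw.1; omega
        · have := hfw.2; omega
      obtain ⟨_, hEqw⟩ := hQw w b' hdw hb'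
      cases b'
      · -- closer edge of w is even: contradiction
        exfalso
        obtain ⟨j', hj', hj'last⟩ : ∃ j', (pos A j' = Sum.inl w ∧ swt A j' w = false) ∧
            ∀ x, (pos A x = Sum.inl w ∧ swt A x w = false) → x ≤ j' := by
          apply last_of_card (fun j hj => visits_lt hT hj.1)
          show (1:ℕ) ≤ lc A w false T
          have h1 : 1 ≤ 2^((d-1)-1) := Nat.one_le_two_pow
          omega
        have hj'lt : j' < j0 + 1 := by
          have h1 : j' ≤ j0 + 1 := hlastw j' hj'.1
          have h2 : j' ≠ j0 + 1 := by
            intro h; rw [h] at hj'; rw [hj'.2] at hswj1; exact absurd hswj1 (by simp)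
          omega
        have := hEqw hlcw j' hj'.1 hj'.2
          (fun x hx hcon => absurd (hj'last x hcon) (by omega))
          (j0+1) hj'lt w hposj1
        omega
      · -- closer edge of w is odd
        have hnolw : ∀ x, j0 + 1 < x → ¬(pos A x = Sum.inl w ∧ swt A x w = true) := by
          intro x hx hcon
          exact absurd (hlastw x hcon.1) (by omega)
        have hsafe := hEqw hlcw (j0+1) hposj1 hswj1 hnolw
        rcases Nat.lt_or_ge (j0+1) m with hm1 | hm1
        · have := hsafe m hm1 u hu
          omega
        · have hmeq : m = j0 + 1 := by omega
          rw [hmeq, hposj1] at hu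
          have : u = w := by injection hu.symm
          rw [this, hdw]
          omega

lemma descend {A : Arrival V} {dist : V → ℕ}
    (hdist : ∀ v : V, A.ShortestLen (Sum.inl v) DestP (dist v))
    (v : V) (h2 : 2 ≤ dist v) : ∃ w : V, dist w = dist v - 1 := by
  obtain ⟨b, hb⟩ := closer_exists hdist v
  rcases hb with ⟨t, ht, h1⟩ | ⟨w, hw, h1⟩
  · omega
  · exact ⟨w, by omega⟩

lemma arr_exists_dist_eq {A : Arrival V} {dist : V → ℕ}
    (hdist : ∀ v : V, A.ShortestLen (Sum.inl v) DestP (dist v)) :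
    ∀ m (v : V), dist v = m → ∀ i, 1 ≤ i → i ≤ m → ∃ u : V, dist u = i := by
  intro m
  induction m using Nat.strong_induction_on with
  | _ m ih =>
    intro v hv i h1 h2
    rcases Nat.eq_or_lt_of_le h2 with he | hlt
    · exact ⟨v, by omega⟩
    · have hm2 : 2 ≤ m := by omega
      obtain ⟨w, hw⟩ := descend hdist v (by omega)
      exact ih (m-1) (by omega) w (by omega) i h1 (by omega)

lemma geo_sum : ∀ L : ℕ, ∑ i ∈ Finset.Icc 1 L, 2^i = 2^(L+1) - 2 := by
  intro L
  induction L with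
  | zero => simp
  | succ L ihL =>
      rw [Finset.sum_Icc_succ_top (by omega : 1 ≤ L + 1), ihL]
      have h1 : (2:ℕ)^(L+1+1) = 2 * 2^(L+1) := by rw [pow_succ]; ring
      have h2 : (1:ℕ) ≤ 2^(L+1) := Nat.one_le_two_pow
      omega

end AuxiliaryProof

/-- The run procedure traverses at most `(n - ℓ + 2) * 2 ^ ℓ - 2` proper edges,
where `ℓ` is the maximum over `v ∈ V` of the shortest-path distance to a destination. -/
theorem arrival_run_length_bound (A : Arrival V) (n ℓ : ℕ) (hn : Fintype.card V = n)
    (dist : V → ℕ) (hdist : ∀ v : V, A.ShortestLen (Sum.inl v) DestP (dist v))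
    (hub : ∀ v : V, dist v ≤ ℓ) (hmax : ∃ v : V, dist v = ℓ) :
    {k : ℕ | ∃ v : V, (A.run k).1 = Sum.inl v}.Finite ∧
      {k : ℕ | ∃ v : V, (A.run k).1 = Sum.inl v}.ncard ≤ (n - ℓ + 2) * 2 ^ ℓ - 2 := by
  classical
  have hex : ∃ k, ∃ t, pos A k = Sum.inr t := exists_inr hdist
  set T := Nat.find hex with hTdef
  have hT : ∃ t, pos A T = Sum.inr t := Nat.find_spec hex
  have hTmin : ∀ k, k < T → ∃ v : V, pos A k = Sum.inl v := by
    intro k hk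
    have := Nat.find_min hex hk
    rcases hp : pos A k with w | t
    · exact ⟨w, rfl⟩
    · exact absurd ⟨t, hp⟩ this
  have hset : {k : ℕ | ∃ v : V, (A.run k).1 = Sum.inl v} = Set.Iio T := by
    ext k
    simp only [Set.mem_setOf_eq, Set.mem_Iio]
    constructor
    · rintro ⟨v, hv⟩
      exact visits_lt hT hv
    · intro hk
      exact hTmin k hk
  rw [hset]
  refine ⟨Set.finite_Iio T, ?_⟩
  have hncard : (Set.Iio T).ncard = T := by
    rw [← Finset.coe_range, Set.ncard_coe_finset, Finset.card_range]
  rw [hncard]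
  -- T ≤ sum of visit counts
  have hsub : Finset.range T ⊆
      Finset.univ.biUnion (fun v : V => (Finset.range T).filter (fun j => pos A j = Sum.inl v)) := by
    intro j hj
    obtain ⟨v, hv⟩ := hTmin j (Finset.mem_range.mp hj)
    exact Finset.mem_biUnion.mpr ⟨v, Finset.mem_univ v, Finset.mem_filter.mpr ⟨hj, hv⟩⟩
  have hTle : T ≤ ∑ v : V, nv A v T := by
    calc T = (Finset.range T).card := (Finset.card_range T).symm
    _ ≤ _ := Finset.card_le_card hsub
    _ ≤ ∑ v : V, nv A v T := Finset.card_biUnion_le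
  -- per-vertex bound
  have hper : ∀ v : V, nv A v T ≤ 2^(dist v) := by
    intro v
    exact Rlem hT hdist (Qlem hT hdist (dist v)) v rfl
  have hsum1 : T ≤ ∑ v : V, 2^(dist v) :=
    le_trans hTle (Finset.sum_le_sum (fun v _ => hper v))
  -- bound the sum of 2^{dist v}
  obtain ⟨v0, hv0⟩ := hmax
  have hl1 : 1 ≤ ℓ := hv0 ▸ arr_dist_pos hdist v0
  have hchoice : ∀ i : ℕ, ∃ u : V, (1 ≤ i → i ≤ ℓ → dist u = i) := by
    intro i
    by_cases h : 1 ≤ i ∧ i ≤ ℓ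
    · obtain ⟨u, hu⟩ := arr_exists_dist_eq hdist ℓ v0 hv0 i h.1 h.2
      exact ⟨u, fun _ _ => hu⟩
    · exact ⟨v0, fun h1 h2 => absurd ⟨h1, h2⟩ h⟩
  choose f hf using hchoice
  have hinj : ∀ i ∈ Finset.Icc 1 ℓ, ∀ j ∈ Finset.Icc 1 ℓ, f i = f j → i = j := by
    intro i hi j hj hij
    simp only [Finset.mem_Icc] at hi hj
    have h1 := hf i hi.1 hi.2
    have h2 := hf j hj.1 hj.2
    rw [hij] at h1; omega
  set S := (Finset.Icc 1 ℓ).image f with hS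
  have hScard : S.card = ℓ := by
    rw [hS, Finset.card_image_of_injOn hinj, Nat.card_Icc]
    omega
  have hln : ℓ ≤ n := by
    have h1 := Finset.card_le_card (Finset.subset_univ S)
    rw [Finset.card_univ, hn] at h1
    omega
  have hsplit : ∑ v : V, 2^(dist v) =
      (∑ v ∈ S, 2^(dist v)) + ∑ v ∈ Finset.univ \ S, 2^(dist v) := by
    rw [add_comm]
    exact (Finset.sum_sdiff (Finset.subset_univ S)).symm
  have hSsum : ∑ v ∈ S, 2^(dist v) = 2^(ℓ+1) - 2 := by
    rw [hS, Finset.sum_image hinj, ← geo_sum ℓ]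
    apply Finset.sum_congr rfl
    intro i hi
    simp only [Finset.mem_Icc] at hi
    rw [hf i hi.1 hi.2]
  have hrest : ∑ v ∈ Finset.univ \ S, 2^(dist v) ≤ (n - ℓ) * 2^ℓ := by
    have hcard : (Finset.univ \ S).card = n - ℓ := by
      rw [Finset.card_sdiff_of_subset (Finset.subset_univ S), hScard, Finset.card_univ, hn]
    calc ∑ v ∈ Finset.univ \ S, 2^(dist v)
        ≤ ∑ _v ∈ Finset.univ \ S, 2^ℓ :=
          Finset.sum_le_sum (fun v _ => Nat.pow_le_pow_right (by omega) (hub v))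
    _ = (n - ℓ) * 2^ℓ := by rw [Finset.sum_const, hcard, smul_eq_mul]
  have hpow : (2:ℕ)^(ℓ+1) = 2 * 2^ℓ := by rw [pow_succ]; ring
  have hpow1 : (1:ℕ) ≤ 2^ℓ := Nat.one_le_two_pow
  have hfinal : (n - ℓ + 2) * 2^ℓ = (n - ℓ) * 2^ℓ + 2 * 2^ℓ := by ring
  omega
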